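/- Let μ, ν be reals with μ + ν = 1 and 0 < ν < 1/2 < μ, let n ≥ 4 be a real, let Δ ≥ 1 be a natural number, and let δ₅ be a real with 0 < δ₅ < ln(μ/ν). Then μ / ( Δ·( 1 - (1 + δ₅/(2Δ))·(ν/μ)^(1/(2Δ)) ) ) ≥ 1 / ( n·Δ·( 1 - ((1 + δ₅/(2Δ))·(ν/μ)^(1/(2Δ)))^(1/(μn)) ) ), where both denominators are positive. -/

import Mathlib

open Real

theorem stmt_4 (μ ν δ₅ n : ℝ) (Δ : ℕ)
    (hμν : μ + ν = 1) (hν0 : 0 < ν) (hν : ν < 1/2) (hμ : 1/2 < μ)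
    (hn : 4 ≤ n) (hΔ : 1 ≤ Δ)
    (hδ₅ : 0 < δ₅) (hδ₅' : δ₅ < Real.log (μ / ν)) :
    0 < (Δ : ℝ) * (1 - (1 + δ₅ / (2 * (Δ : ℝ))) * (ν / μ) ^ (1 / (2 * (Δ : ℝ)))) ∧
    0 < (n * (Δ : ℝ)) *
        (1 - ((1 + δ₅ / (2 * (Δ : ℝ))) * (ν / μ) ^ (1 / (2 * (Δ : ℝ)))) ^ (1 / (μ * n))) ∧
    μ / ((Δ : ℝ) * (1 - (1 + δ₅ / (2 * (Δ : ℝ))) * (ν / μ) ^ (1 / (2 * (Δ : ℝ)))))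
      ≥ 1 / ((n * (Δ : ℝ)) *
        (1 - ((1 + δ₅ / (2 * (Δ : ℝ))) * (ν / μ) ^ (1 / (2 * (Δ : ℝ)))) ^ (1 / (μ * n)))) := by
  have hμ0 : (0:ℝ) < μ := by linarith
  have hD : (1:ℝ) ≤ (Δ : ℝ) := by exact_mod_cast hΔ
  have hD0 : (0:ℝ) < (Δ : ℝ) := by linarith
  set D : ℝ := (Δ : ℝ)
  set r : ℝ := 1 / (2 * D) with hr
  have hr0 : 0 < r := by positivity
  set x : ℝ := (1 + δ₅ / (2 * D)) * (ν / μ) ^ r with hx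
  have hνμ : (0:ℝ) < ν / μ := by positivity
  have hx0 : 0 < x := by
    apply mul_pos
    · have : 0 < δ₅ / (2 * D) := by positivity
      linarith
    · exact rpow_pos_of_pos hνμ r
  -- x < 1
  have hx1 : x < 1 := by
    have h1 : 1 + δ₅ / (2 * D) < (μ / ν) ^ r := by
      have he : δ₅ / (2 * D) + 1 < Real.exp (δ₅ / (2 * D)) :=
        Real.add_one_lt_exp (by positivity)
      have he2 : Real.exp (δ₅ / (2 * D)) < Real.exp (Real.log (μ / ν) / (2 * D)) := by
        apply Real.exp_lt_exp.2
        gcongr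
      have he3 : Real.exp (Real.log (μ / ν) / (2 * D)) = (μ / ν) ^ r := by
        rw [Real.rpow_def_of_pos (by positivity), hr]
        ring_nf
      linarith [he, he2, he3.symm ▸ he2]
    have h2 : (μ / ν) ^ r * (ν / μ) ^ r = 1 := by
      rw [← Real.mul_rpow (by positivity) (by positivity)]
      rw [div_mul_div_comm]
      rw [show μ * ν / (ν * μ) = 1 by field_simp]
      exact Real.one_rpow r
    calc x < (μ / ν) ^ r * (ν / μ) ^ r := by
            apply mul_lt_mul_of_pos_right h1 (rpow_pos_of_pos hνμ r)
      _ = 1 := h2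
  -- set up y and c
  have hc2 : (2:ℝ) ≤ μ * n := by nlinarith
  have hc0 : (0:ℝ) < μ * n := by linarith
  set t : ℝ := 1 / (μ * n) with ht
  have ht0 : 0 < t := by positivity
  set y : ℝ := x ^ t with hy
  have hy0 : 0 < y := rpow_pos_of_pos hx0 t
  have hy1 : y < 1 := Real.rpow_lt_one hx0.le hx1 ht0
  -- Bernoulli: 1 + c*(y-1) ≤ y^c = x
  have hyc : y ^ (μ * n) = x := by
    rw [hy, ← Real.rpow_mul hx0.le, ht, one_div_mul_cancel hc0.ne', Real.rpow_one]
  have hbern : 1 + (μ * n) * (y - 1) ≤ x := by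
    have := one_add_mul_self_le_rpow_one_add (by linarith : (-1:ℝ) ≤ y - 1)
      (by linarith : (1:ℝ) ≤ μ * n)
    rw [show (1:ℝ) + (y - 1) = y by ring, hyc] at this
    exact this
  have hkey : 1 - x ≤ μ * n * (1 - y) := by nlinarith
  have hA : 0 < (n * D) * (1 - y) := by
    apply mul_pos (by nlinarith) (by linarith)
  have hB : 0 < D * (1 - x) := mul_pos hD0 (by linarith)
  refine ⟨hB, hA, ?_⟩
  rw [ge_iff_le, div_le_div_iff₀ hA hB]
  have : D * (1 - x) ≤ D * (μ * n * (1 - y)) := by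
    apply mul_le_mul_of_nonneg_left hkey hD0.le
  nlinarith
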